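/- Let φ ∈ C¹(ℝ) be convex with nondecreasing left-continuous derivative φ'. For all x, y ∈ ℝ, φ(y) − φ(κ_{a,b}(x−y)+y) + κ_{a,b}(x−y)·φ'(x) = 2·∫_ℝ S^H_{1/2,a,b,θ}(x,y) dφ'(θ), where the elementary score is S^H_{1/2,a,b,θ}(x,y) = (1/2)·min(θ−y, b) if y ≤ θ < x, (1/2)·min(y−θ, a) if x ≤ θ < y, and 0 otherwise, and dφ'(θ) is the Lebesgue–Stieltjes measure of φ'. -/

import Mathlib

open Set MeasureTheory Function

section Aux

variable {φ : ℝ → ℝ} {f : StieltjesFunction ℝ}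

lemma leftLim_eq_self (hcont : Continuous f) (x : ℝ) : Function.leftLim (f : ℝ → ℝ) x = f x :=
  leftLim_eq_of_tendsto
    ((hcont.tendsto x).mono_left nhdsWithin_le_nhds)

lemma ftc (hderiv : ∀ t : ℝ, HasDerivAt φ (f t) t) (hcont : Continuous f) (c d : ℝ) :
    ∫ t in c..d, f t = φ d - φ c :=
  intervalIntegral.integral_eq_sub_of_hasDerivAt (fun t _ => hderiv t)
    (hcont.intervalIntegrable c d)

lemma key1 (hderiv : ∀ t : ℝ, HasDerivAt φ (f t) t) (hcont : Continuous f)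
    {b c d : ℝ} (hb : 0 < b) (hcd : c ≤ d) :
    ∫ θ in Ico c d, min (θ - c) b ∂f.measure
      = min (d - c) b * f d - (φ (c + min (d - c) b) - φ c) := by
  set κ := min (d - c) b with hκ
  have hκ0 : 0 ≤ κ := le_min (by linarith) hb.le
  have hκdc : κ ≤ d - c := min_le_left _ _
  have hκb : κ ≤ b := min_le_right _ _
  haveI : IsFiniteMeasure (f.measure.restrict (Ico c d)) := by
    constructor
    rw [Measure.restrict_apply_univ]
    exact lt_of_le_of_lt (measure_mono Ico_subset_Icc_self)
      (by rw [f.measure_Icc]; exact ENNReal.ofReal_lt_top)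
  have hgc : Continuous fun θ : ℝ => min (θ - c) b :=
    (continuous_id.sub continuous_const).min continuous_const
  have hint : IntegrableOn (fun θ : ℝ => min (θ - c) b) (Ico c d) f.measure :=
    (hgc.integrableOn_Icc).mono_set Ico_subset_Icc_self
  have hnn : 0 ≤ᵐ[f.measure.restrict (Ico c d)] fun θ : ℝ => min (θ - c) b := by
    filter_upwards [ae_restrict_mem measurableSet_Ico] with θ hθ
    simp only [Pi.zero_apply]
    exact le_min (by linarith [hθ.1]) hb.le
  rw [hint.integral_eq_integral_meas_lt hnn]
  have hmbl : ∀ t : ℝ, MeasurableSet {θ : ℝ | t < min (θ - c) b} :=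
    fun t => measurableSet_lt measurable_const
      ((measurable_id.sub measurable_const).min measurable_const)
  have hcongr : ∀ t ∈ Ioi (0:ℝ),
      ((f.measure.restrict (Ico c d)) {θ : ℝ | t < min (θ - c) b}).toReal
        = indicator (Ioo 0 κ) (fun s => f d - f (c + s)) t := by
    intro t ht
    rw [mem_Ioi] at ht
    rw [Measure.restrict_apply (hmbl t)]
    by_cases htb : t < b
    · have hset : {θ : ℝ | t < min (θ - c) b} ∩ Ico c d = Ioo (c + t) d := by
        ext θ
        simp only [mem_inter_iff, mem_setOf_eq, lt_min_iff, mem_Ico, mem_Ioo]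
        constructor
        · rintro ⟨⟨h1, _⟩, _, h4⟩; exact ⟨by linarith, h4⟩
        · rintro ⟨h1, h2⟩; exact ⟨⟨by linarith, htb⟩, by linarith, h2⟩
      rw [hset, f.measure_Ioo, leftLim_eq_self hcont]
      by_cases htκ : t < κ
      · rw [indicator_of_mem (mem_Ioo.2 ⟨ht, htκ⟩)]
        exact ENNReal.toReal_ofReal (sub_nonneg.2 (f.mono (by linarith)))
      · rw [indicator_of_notMem (fun h => htκ (mem_Ioo.1 h).2)]
        have : f d - f (c + t) ≤ 0 := by
          have : d ≤ c + t := by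
            have hκt : κ ≤ t := not_lt.1 htκ
            have : d - c ≤ t := by
              rcases le_or_gt (d - c) b with h | h
              · have he : κ = d - c := by rw [hκ]; exact min_eq_left h
                linarith
              · have he : κ = b := by rw [hκ]; exact min_eq_right h.le
                linarith
            linarith
          linarith [f.mono this]
        rw [ENNReal.ofReal_eq_zero.2 this, ENNReal.toReal_zero]
    · have hset : {θ : ℝ | t < min (θ - c) b} ∩ Ico c d = ∅ := by
        ext θ
        simp only [mem_inter_iff, mem_setOf_eq, lt_min_iff, mem_empty_iff_false, iff_false]
        rintro ⟨⟨_, h2⟩, _⟩; exact htb h2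
      rw [hset, measure_empty, ENNReal.toReal_zero,
        indicator_of_notMem (fun h => htb (lt_of_lt_of_le (mem_Ioo.1 h).2 hκb))]
  simp only [measureReal_def]
  rw [setIntegral_congr_fun measurableSet_Ioi hcongr,
    setIntegral_indicator measurableSet_Ioo,
    inter_eq_right.2 Ioo_subset_Ioi_self, ← integral_Ioc_eq_integral_Ioo,
    ← intervalIntegral.integral_of_le hκ0]
  have h1 : ∫ s in (0:ℝ)..κ, (f d - f (c + s)) =
      (∫ s in (0:ℝ)..κ, f d) - ∫ s in (0:ℝ)..κ, f (c + s) :=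
    intervalIntegral.integral_sub (intervalIntegrable_const)
      ((hcont.comp (continuous_const.add continuous_id)).intervalIntegrable _ _)
  have h2 : ∫ s in (0:ℝ)..κ, f (c + s) = φ (c + κ) - φ c := by
    have : ∀ s : ℝ, f (c + s) = f (s + c) := fun s => by rw [add_comm]
    simp_rw [this]
    rw [intervalIntegral.integral_comp_add_right (fun s => f s) c, zero_add,
      ftc hderiv hcont, add_comm]
  rw [h1, h2, intervalIntegral.integral_const]
  simp only [smul_eq_mul, sub_zero]

lemma key2 (hderiv : ∀ t : ℝ, HasDerivAt φ (f t) t) (hcont : Continuous f)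
    {a c d : ℝ} (ha : 0 < a) (hcd : c ≤ d) :
    ∫ θ in Ico c d, min (d - θ) a ∂f.measure
      = φ d - φ (d - min (d - c) a) - min (d - c) a * f c := by
  set m := min (d - c) a with hm
  have hm0 : 0 ≤ m := le_min (by linarith) ha.le
  have hmdc : m ≤ d - c := min_le_left _ _
  have hma : m ≤ a := min_le_right _ _
  haveI : IsFiniteMeasure (f.measure.restrict (Ico c d)) := by
    constructor
    rw [Measure.restrict_apply_univ]
    exact lt_of_le_of_lt (measure_mono Ico_subset_Icc_self)
      (by rw [f.measure_Icc]; exact ENNReal.ofReal_lt_top)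
  have hgc : Continuous fun θ : ℝ => min (d - θ) a :=
    ((continuous_const.sub continuous_id).min continuous_const)
  have hint : IntegrableOn (fun θ : ℝ => min (d - θ) a) (Ico c d) f.measure :=
    (hgc.integrableOn_Icc).mono_set Ico_subset_Icc_self
  have hnn : 0 ≤ᵐ[f.measure.restrict (Ico c d)] fun θ : ℝ => min (d - θ) a := by
    filter_upwards [ae_restrict_mem measurableSet_Ico] with θ hθ
    simp only [Pi.zero_apply]
    exact le_min (by linarith [hθ.2]) ha.le
  rw [hint.integral_eq_integral_meas_lt hnn]
  have hmbl : ∀ t : ℝ, MeasurableSet {θ : ℝ | t < min (d - θ) a} :=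
    fun t => measurableSet_lt measurable_const
      ((measurable_const.sub measurable_id).min measurable_const)
  have hcongr : ∀ t ∈ Ioi (0:ℝ),
      ((f.measure.restrict (Ico c d)) {θ : ℝ | t < min (d - θ) a}).toReal
        = indicator (Ioo 0 m) (fun s => f (d - s) - f c) t := by
    intro t ht
    rw [mem_Ioi] at ht
    rw [Measure.restrict_apply (hmbl t)]
    by_cases hta : t < a
    · have hset : {θ : ℝ | t < min (d - θ) a} ∩ Ico c d = Ico c (d - t) := by
        ext θ
        simp only [mem_inter_iff, mem_setOf_eq, lt_min_iff, mem_Ico]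
        constructor
        · rintro ⟨⟨h1, _⟩, h3, _⟩; exact ⟨h3, by linarith⟩
        · rintro ⟨h1, h2⟩; exact ⟨⟨by linarith, hta⟩, h1, by linarith⟩
      rw [hset, f.measure_Ico, leftLim_eq_self hcont, leftLim_eq_self hcont]
      by_cases htm : t < m
      · rw [indicator_of_mem (mem_Ioo.2 ⟨ht, htm⟩)]
        exact ENNReal.toReal_ofReal (sub_nonneg.2 (f.mono (by linarith)))
      · rw [indicator_of_notMem (fun h => htm (mem_Ioo.1 h).2)]
        have : f (d - t) - f c ≤ 0 := by
          have : d - t ≤ c := by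
            have hmt : m ≤ t := not_lt.1 htm
            have : d - c ≤ t := by
              rcases le_or_gt (d - c) a with h | h
              · have he : m = d - c := by rw [hm]; exact min_eq_left h
                linarith
              · have he : m = a := by rw [hm]; exact min_eq_right h.le
                linarith
            linarith
          linarith [f.mono this]
        rw [ENNReal.ofReal_eq_zero.2 this, ENNReal.toReal_zero]
    · have hset : {θ : ℝ | t < min (d - θ) a} ∩ Ico c d = ∅ := by
        ext θ
        simp only [mem_inter_iff, mem_setOf_eq, lt_min_iff, mem_empty_iff_false, iff_false]
        rintro ⟨⟨_, h2⟩, _⟩; exact hta h2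
      rw [hset, measure_empty, ENNReal.toReal_zero,
        indicator_of_notMem (fun h => hta (lt_of_lt_of_le (mem_Ioo.1 h).2 hma))]
  simp only [measureReal_def]
  rw [setIntegral_congr_fun measurableSet_Ioi hcongr,
    setIntegral_indicator measurableSet_Ioo,
    inter_eq_right.2 Ioo_subset_Ioi_self, ← integral_Ioc_eq_integral_Ioo,
    ← intervalIntegral.integral_of_le hm0]
  have h1 : ∫ s in (0:ℝ)..m, (f (d - s) - f c) =
      (∫ s in (0:ℝ)..m, f (d - s)) - ∫ s in (0:ℝ)..m, f c :=
    intervalIntegral.integral_sub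
      ((hcont.comp (continuous_const.sub continuous_id)).intervalIntegrable _ _)
      (intervalIntegrable_const)
  have h2 : ∫ s in (0:ℝ)..m, f (d - s) = φ d - φ (d - m) := by
    rw [intervalIntegral.integral_comp_sub_left (fun s => f s) d, sub_zero,
      ftc hderiv hcont]
  rw [h1, h2, intervalIntegral.integral_const]
  simp only [smul_eq_mul, sub_zero]

end Aux

/-- The capping function `κ_{a,b}(x) = max(min(x,b), -a)`. -/
noncomputable def kap (a b x : ℝ) : ℝ := max (min x b) (-a)

/-- Elementary scoring function `S^H_{α,a,b,θ}` for the Huber functional. -/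
noncomputable def elemScore (α a b θ x y : ℝ) : ℝ :=
  if y ≤ θ ∧ θ < x then (1 - α) * min (θ - y) b
  else if x ≤ θ ∧ θ < y then α * min (y - θ) a
  else 0

/-- Mixture representation identity (case `α = 1/2`): for a convex `C¹` function `φ` with
nondecreasing derivative `φ'`,
`φ(y) − φ(κ_{a,b}(x−y)+y) + κ_{a,b}(x−y)·φ'(x) = 2∫ S^H_{1/2,a,b,θ}(x,y) dφ'(θ)`,
where `dφ'` is the Lebesgue–Stieltjes measure of `φ'`. -/
theorem stmt15 (a b : ℝ) (ha : 0 < a) (hb : 0 < b)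
    (φ : ℝ → ℝ) (f : StieltjesFunction ℝ) (hconv : ConvexOn ℝ Set.univ φ)
    (hderiv : ∀ t : ℝ, HasDerivAt φ (f t) t) (hcont : Continuous f) :
    ∀ x y : ℝ, φ y - φ (kap a b (x - y) + y) + kap a b (x - y) * f x
      = 2 * ∫ θ, elemScore (1 / 2) a b θ x y ∂f.measure := by
  intro x y
  rcases le_or_gt y x with hyx | hxy
  · have hκ : kap a b (x - y) = min (x - y) b := by
      unfold kap
      exact max_eq_left (le_trans (neg_nonpos.2 ha.le) (le_min (by linarith) hb.le))
    have hsc : ∀ θ : ℝ, elemScore (1/2) a b θ x y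
        = indicator (Ico y x) (fun θ => (1/2 : ℝ) * min (θ - y) b) θ := by
      intro θ
      unfold elemScore
      by_cases h1 : y ≤ θ ∧ θ < x
      · rw [if_pos h1, indicator_of_mem (mem_Ico.2 h1)]; norm_num
      · rw [if_neg h1, indicator_of_notMem (fun h => h1 (mem_Ico.1 h)), if_neg]
        rintro ⟨h2, h3⟩; linarith
    have hi : ∫ θ, elemScore (1/2) a b θ x y ∂f.measure
        = (1/2 : ℝ) * ∫ θ in Ico y x, min (θ - y) b ∂f.measure := by
      rw [← MeasureTheory.integral_const_mul, ← integral_indicator measurableSet_Ico]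
      exact integral_congr_ae (ae_of_all _ hsc)
    rw [hi, key1 hderiv hcont hb hyx, hκ,
      show min (x - y) b + y = y + min (x - y) b from add_comm _ _]
    ring
  · have hκ : kap a b (x - y) = -(min (y - x) a) := by
      unfold kap
      rw [min_eq_left (by linarith : x - y ≤ b),
        show x - y = -(y - x) by ring, max_neg_neg]
    have hsc : ∀ θ : ℝ, elemScore (1/2) a b θ x y
        = indicator (Ico x y) (fun θ => (1/2 : ℝ) * min (y - θ) a) θ := by
      intro θ
      unfold elemScore
      by_cases h1 : x ≤ θ ∧ θ < y
      · rw [if_neg (by rintro ⟨h2, h3⟩; linarith), if_pos h1,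
          indicator_of_mem (mem_Ico.2 h1)]
      · rw [if_neg (by rintro ⟨h2, h3⟩; linarith), if_neg h1,
          indicator_of_notMem (fun h => h1 (mem_Ico.1 h))]
    have hi : ∫ θ, elemScore (1/2) a b θ x y ∂f.measure
        = (1/2 : ℝ) * ∫ θ in Ico x y, min (y - θ) a ∂f.measure := by
      rw [← MeasureTheory.integral_const_mul, ← integral_indicator measurableSet_Ico]
      exact integral_congr_ae (ae_of_all _ hsc)
    rw [hi, key2 hderiv hcont ha hxy.le, hκ,
      show -(min (y - x) a) + y = y - min (y - x) a by ring]
    ring
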